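/- Let Γ = ⟨c, a_1, a_2, ..., a_{2m} | c² [a_1,a_2]···[a_{2m−1},a_{2m}] = 1⟩ and let G = B_4 be the Artin braid group on 4 strands with Ω = σ2 σ3 σ1^{−1} σ2^{−1}. Then the assignment c ↦ Ω, a_1 ↦ σ2 Ω^{−1} σ2^{−1}, a_2 ↦ σ2 σ3² σ2^{−1}, a_k ↦ Ω^{i(a_k)} for k ≥ 3 (i(a_k) ∈ {0,1}) extends to a group homomorphism Γ → B_4. -/

import Mathlib

open scoped commutatorElement

/-- Defining relations of the Artin braid group with `m` generators
(braid group on `m+1` strands): the braid and the commuting relations. -/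
def braidRels (m : ℕ) : Set (FreeGroup (Fin m)) :=
  { r | (∃ i j : Fin m, (i : ℕ) + 1 = (j : ℕ) ∧
          r = FreeGroup.of i * FreeGroup.of j * FreeGroup.of i *
              (FreeGroup.of j)⁻¹ * (FreeGroup.of i)⁻¹ * (FreeGroup.of j)⁻¹) ∨
        (∃ i j : Fin m, (i : ℕ) + 2 ≤ (j : ℕ) ∧
          r = FreeGroup.of i * FreeGroup.of j * (FreeGroup.of i)⁻¹ * (FreeGroup.of j)⁻¹) }

/-- The Artin braid group with `m` generators σ₁,…,σ_m (on `m+1` strands). -/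
abbrev Braid (m : ℕ) : Type := PresentedGroup (braidRels m)

/-- The generator σ_{i+1} (0-based index `i`). -/
def sigmaB {m : ℕ} (i : Fin m) : Braid m := PresentedGroup.of i

/-- The generator with 0-based natural-number index (junk value `1` out of range). -/
def sigma' {m : ℕ} (k : ℕ) : Braid m := if h : k < m then sigmaB ⟨k, h⟩ else 1

/-- The Garside half-twist Δ = (σ₁⋯σ_m)(σ₁⋯σ_{m-1})⋯(σ₁σ₂)(σ₁). -/
def garside (m : ℕ) : Braid m :=
  (((List.range m).reverse).map
    (fun n => ((List.range (n + 1)).map (fun t => (sigma' t : Braid m))).prod)).prod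

/-- The pure braid generator A_{i,j} = σ_{j-1}⋯σ_{i+1} σ_i² σ_{i+1}⁻¹⋯σ_{j-1}⁻¹
(1-based strand indices `i < j`). -/
def Abr {m : ℕ} (i j : ℕ) : Braid m :=
  (((List.range' i (j - 1 - i)).reverse.map (fun t => (sigma' t : Braid m))).prod) *
    ((sigma' (i - 1) : Braid m)) ^ 2 *
    (((List.range' i (j - 1 - i)).reverse.map (fun t => (sigma' t : Braid m))).prod)⁻¹

/-- The braid Ω = σ₂σ₃σ₁⁻¹σ₂⁻¹ in B₄. -/
def OmegaB : Braid 3 := sigma' 1 * sigma' 2 * (sigma' 0)⁻¹ * (sigma' 1)⁻¹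

/-- Relator of the non-orientable surface of genus 2m+2:
u v u v⁻¹ [a₁,a₂]⋯[a_{2m−1},a_{2m}], with u = inl 0, v = inl 1 and
a_{2k+1} = inr (k,0), a_{2k+2} = inr (k,1). -/
def relII (m : ℕ) : FreeGroup (Fin 2 ⊕ Fin m × Fin 2) :=
  FreeGroup.of (Sum.inl 0) * FreeGroup.of (Sum.inl 1) * FreeGroup.of (Sum.inl 0) *
    (FreeGroup.of (Sum.inl 1))⁻¹ *
    ((List.finRange m).map
      (fun k => ⁅FreeGroup.of ((Sum.inr (k, (0 : Fin 2)) : Fin 2 ⊕ Fin m × Fin 2)),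
        FreeGroup.of ((Sum.inr (k, (1 : Fin 2)) : Fin 2 ⊕ Fin m × Fin 2))⁆)).prod

/-- Fundamental group of the non-orientable surface of genus 2m+2. -/
abbrev SurfII (m : ℕ) : Type := PresentedGroup {relII m}

/-- Relator of the non-orientable surface of genus 2m+1:
c² [a₁,a₂]⋯[a_{2m−1},a_{2m}], with c = inl 0 and a_{2k+1} = inr (k,0), a_{2k+2} = inr (k,1). -/
def relIII (m : ℕ) : FreeGroup (Fin 1 ⊕ Fin m × Fin 2) :=
  FreeGroup.of (Sum.inl 0) * FreeGroup.of (Sum.inl 0) *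
    ((List.finRange m).map
      (fun k => ⁅FreeGroup.of ((Sum.inr (k, (0 : Fin 2)) : Fin 1 ⊕ Fin m × Fin 2)),
        FreeGroup.of ((Sum.inr (k, (1 : Fin 2)) : Fin 1 ⊕ Fin m × Fin 2))⁆)).prod

/-- Fundamental group of the non-orientable surface of genus 2m+1. -/
abbrev SurfIII (m : ℕ) : Type := PresentedGroup {relIII m}

/-- Relator of the orientable surface of genus m: [a₁,a₂]⋯[a_{2m−1},a_{2m}]. -/
def relI (m : ℕ) : FreeGroup (Fin m × Fin 2) :=
  ((List.finRange m).map
    (fun k => ⁅FreeGroup.of ((k, (0 : Fin 2))), FreeGroup.of ((k, (1 : Fin 2)))⁆)).prod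

/-- Fundamental group of the orientable surface of genus m. -/
abbrev SurfI (m : ℕ) : Type := PresentedGroup {relI m}

lemma braid_rel_mk {m : ℕ} (r : FreeGroup (Fin m)) (hr : r ∈ braidRels m) :
    (QuotientGroup.mk r : Braid m) = 1 :=
  (QuotientGroup.eq_one_iff r).mpr (Subgroup.subset_normalClosure hr)

lemma braid_rel1 {m : ℕ} (i j : Fin m) (h : (i : ℕ) + 1 = j) :
    sigmaB i * sigmaB j * sigmaB i = sigmaB j * sigmaB i * sigmaB j := by
  have := braid_rel_mk _ (Or.inl ⟨i, j, h, rfl⟩)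
  have h2 : sigmaB i * sigmaB j * sigmaB i * (sigmaB j)⁻¹ * (sigmaB i)⁻¹ * (sigmaB j)⁻¹ = 1 := this
  calc sigmaB i * sigmaB j * sigmaB i
      = (sigmaB i * sigmaB j * sigmaB i * (sigmaB j)⁻¹ * (sigmaB i)⁻¹ * (sigmaB j)⁻¹) *
        (sigmaB j * sigmaB i * sigmaB j) := by group
    _ = sigmaB j * sigmaB i * sigmaB j := by rw [h2]; group

lemma braid_rel2 {m : ℕ} (i j : Fin m) (h : (i : ℕ) + 2 ≤ j) :
    sigmaB i * sigmaB j = sigmaB j * sigmaB i := by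
  have := braid_rel_mk _ (Or.inr ⟨i, j, h, rfl⟩)
  have h2 : sigmaB i * sigmaB j * (sigmaB i)⁻¹ * (sigmaB j)⁻¹ = 1 := this
  calc sigmaB i * sigmaB j
      = (sigmaB i * sigmaB j * (sigmaB i)⁻¹ * (sigmaB j)⁻¹) * (sigmaB j * sigmaB i) := by group
    _ = sigmaB j * sigmaB i := by rw [h2]; group

lemma sig0 : (sigma' 0 : Braid 3) = sigmaB ⟨0, by norm_num⟩ := dif_pos _
lemma sig1 : (sigma' 1 : Braid 3) = sigmaB ⟨1, by norm_num⟩ := dif_pos _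
lemma sig2 : (sigma' 2 : Braid 3) = sigmaB ⟨2, by norm_num⟩ := dif_pos _

lemma keyB :
    OmegaB * OmegaB * ((sigma' 1 : Braid 3) * OmegaB⁻¹ * (sigma' 1)⁻¹) *
      ((sigma' 1 : Braid 3) * ((sigma' 2 : Braid 3) * sigma' 2) * (sigma' 1)⁻¹) *
      ((sigma' 1 : Braid 3) * OmegaB⁻¹ * (sigma' 1)⁻¹)⁻¹ *
      ((sigma' 1 : Braid 3) * ((sigma' 2 : Braid 3) * sigma' 2) * (sigma' 1)⁻¹)⁻¹ = 1 := by
  set a : Braid 3 := sigma' 0 with ha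
  set b : Braid 3 := sigma' 1 with hb
  set c : Braid 3 := sigma' 2 with hc
  have r01 : a * b * a = b * a * b := by
    rw [ha, hb, sig0, sig1]; exact braid_rel1 _ _ rfl
  have r12 : b * c * b = c * b * c := by
    rw [hb, hc, sig1, sig2]; exact braid_rel1 _ _ rfl
  have r02 : a * c = c * a := by
    rw [ha, hc, sig0, sig2]; exact braid_rel2 _ _ (by norm_num)
  have hW : OmegaB = b * c * a⁻¹ * b⁻¹ := rfl
  have h1 : b⁻¹ * c * b = c * b * c⁻¹ := by
    calc b⁻¹ * c * b = b⁻¹ * (c * b * c) * c⁻¹ := by group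
      _ = b⁻¹ * (b * c * b) * c⁻¹ := by rw [r12]
      _ = c * b * c⁻¹ := by group
  have h2 : a * b * a⁻¹ = b⁻¹ * a * b := by
    calc a * b * a⁻¹ = b⁻¹ * (b * a * b) * a⁻¹ := by group
      _ = b⁻¹ * (a * b * a) * a⁻¹ := by rw [r01]
      _ = b⁻¹ * a * b := by group
  have hac : a⁻¹ * c = c * a⁻¹ := by
    calc a⁻¹ * c = a⁻¹ * (c * a) * a⁻¹ := by group
      _ = a⁻¹ * (a * c) * a⁻¹ := by rw [r02]
      _ = c * a⁻¹ := by group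
  have S1 : OmegaB⁻¹ * (c * c) * OmegaB = b * a * b * b * a⁻¹ * b⁻¹ := by
    calc OmegaB⁻¹ * (c * c) * OmegaB
        = b * a * c⁻¹ * (b⁻¹ * c * b) * (b⁻¹ * c * b) * c * a⁻¹ * b⁻¹ := by rw [hW]; group
      _ = b * a * c⁻¹ * (c * b * c⁻¹) * (c * b * c⁻¹) * c * a⁻¹ * b⁻¹ := by rw [h1]
      _ = b * a * b * b * a⁻¹ * b⁻¹ := by group
  have S2 : a * b * b * a⁻¹ = b⁻¹ * a * a * b := by
    calc a * b * b * a⁻¹ = (a * b * a⁻¹) * (a * b * a⁻¹) := by group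
      _ = (b⁻¹ * a * b) * (b⁻¹ * a * b) := by rw [h2]
      _ = b⁻¹ * a * a * b := by group
  calc OmegaB * OmegaB * (b * OmegaB⁻¹ * b⁻¹) * (b * (c * c) * b⁻¹) *
        (b * OmegaB⁻¹ * b⁻¹)⁻¹ * (b * (c * c) * b⁻¹)⁻¹
      = OmegaB * OmegaB * b * (OmegaB⁻¹ * (c * c) * OmegaB) * c⁻¹ * c⁻¹ * b⁻¹ := by group
    _ = OmegaB * OmegaB * b * (b * a * b * b * a⁻¹ * b⁻¹) * c⁻¹ * c⁻¹ * b⁻¹ := by rw [S1]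
    _ = OmegaB * OmegaB * (b * b * (a * b * b * a⁻¹) * b⁻¹ * c⁻¹ * c⁻¹ * b⁻¹) := by group
    _ = OmegaB * OmegaB * (b * b * (b⁻¹ * a * a * b) * b⁻¹ * c⁻¹ * c⁻¹ * b⁻¹) := by rw [S2]
    _ = b * c * (a⁻¹ * c) * a * c⁻¹ * c⁻¹ * b⁻¹ := by rw [hW]; group
    _ = b * c * (c * a⁻¹) * a * c⁻¹ * c⁻¹ * b⁻¹ := by rw [hac]
    _ = 1 := by group

def fIII (m : ℕ) (ia : Fin m × Fin 2 → ℕ) : Fin 1 ⊕ Fin m × Fin 2 → Braid 3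
  | Sum.inl _ => OmegaB
  | Sum.inr (k, j) =>
      if (k : ℕ) = 0 then
        (if j = 0 then sigma' 1 * OmegaB⁻¹ * (sigma' 1)⁻¹
         else sigma' 1 * (sigma' 2 : Braid 3) ^ 2 * (sigma' 1)⁻¹)
      else OmegaB ^ ia (k, j)


/-- The assignment c ↦ Ω, a₁ ↦ σ₂ Ω⁻¹ σ₂⁻¹, a₂ ↦ σ₂ σ₃² σ₂⁻¹, a_k ↦ Ω^{i(a_k)} (k ≥ 3)
extends to a homomorphism from the fundamental group of the non-orientable surface of
genus 2m+1 to the braid group B₄, where Ω = σ₂σ₃σ₁⁻¹σ₂⁻¹. -/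
theorem stmt19 (m : ℕ) (hm : 0 < m) (ia : Fin m × Fin 2 → ℕ) (hia : ∀ x, ia x ≤ 1) :
    ∃ φ : SurfIII m →* Braid 3,
      φ (PresentedGroup.of (Sum.inl 0)) = OmegaB ∧
      φ (PresentedGroup.of (Sum.inr ((⟨0, hm⟩ : Fin m), 0))) =
        sigma' 1 * OmegaB⁻¹ * (sigma' 1)⁻¹ ∧
      φ (PresentedGroup.of (Sum.inr ((⟨0, hm⟩ : Fin m), 1))) =
        sigma' 1 * (sigma' 2 : Braid 3) ^ 2 * (sigma' 1)⁻¹ ∧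
      ∀ (k : Fin m), 1 ≤ (k : ℕ) → ∀ j : Fin 2,
        φ (PresentedGroup.of (Sum.inr (k, j))) = OmegaB ^ (ia (k, j)) := by
  obtain ⟨n, rfl⟩ : ∃ n, m = n + 1 := ⟨m - 1, (Nat.succ_pred_eq_of_pos hm).symm⟩
  set f := fIII (n + 1) ia with hf
  have hrel : ∀ r ∈ ({relIII (n + 1)} : Set (FreeGroup (Fin 1 ⊕ Fin (n + 1) × Fin 2))),
      FreeGroup.lift f r = 1 := by
    intro r hr
    rw [Set.mem_singleton_iff] at hr
    subst hr
    rw [relIII, map_mul, map_mul, map_list_prod, List.map_map]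
    have hmap : ∀ k : Fin (n + 1),
        (FreeGroup.lift f ∘ fun k => ⁅FreeGroup.of
            ((Sum.inr (k, (0 : Fin 2)) : Fin 1 ⊕ Fin (n + 1) × Fin 2)),
          FreeGroup.of ((Sum.inr (k, (1 : Fin 2)) : Fin 1 ⊕ Fin (n + 1) × Fin 2))⁆) k
        = ⁅f (Sum.inr (k, 0)), f (Sum.inr (k, 1))⁆ := by
      intro k
      simp [map_commutatorElement]
    rw [List.finRange_succ, List.map_cons, List.prod_cons, List.map_map]
    have htail : ((List.finRange n).map
        ((FreeGroup.lift f ∘ fun k => ⁅FreeGroup.of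
            ((Sum.inr (k, (0 : Fin 2)) : Fin 1 ⊕ Fin (n + 1) × Fin 2)),
          FreeGroup.of ((Sum.inr (k, (1 : Fin 2)) : Fin 1 ⊕ Fin (n + 1) × Fin 2))⁆) ∘
            Fin.succ)).prod = 1 := by
      apply List.prod_eq_one
      intro x hx
      simp only [List.mem_map] at hx
      obtain ⟨k, -, rfl⟩ := hx
      rw [Function.comp_apply, hmap]
      have h0 : ((Fin.succ k : Fin (n + 1)) : ℕ) ≠ 0 := by simp [Fin.val_succ]
      have e0 : f (Sum.inr (Fin.succ k, 0)) = OmegaB ^ ia (Fin.succ k, 0) := by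
        simp [hf, fIII, h0]
      have e1 : f (Sum.inr (Fin.succ k, 1)) = OmegaB ^ ia (Fin.succ k, 1) := by
        simp [hf, fIII, h0]
      rw [e0, e1, commutatorElement_eq_one_iff_commute]
      exact (Commute.refl OmegaB).pow_pow _ _
    rw [hmap, htail, mul_one]
    have ef : f (Sum.inl 0) = OmegaB := rfl
    have ef0 : f (Sum.inr ((0 : Fin (n + 1)), 0)) =
        sigma' 1 * OmegaB⁻¹ * (sigma' 1)⁻¹ := rfl
    have ef1 : f (Sum.inr ((0 : Fin (n + 1)), 1)) =
        sigma' 1 * (sigma' 2 : Braid 3) ^ 2 * (sigma' 1)⁻¹ := rfl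
    rw [FreeGroup.lift_apply_of, ef, ef0, ef1, commutatorElement_def]
    have := keyB
    rw [show ((sigma' 2 : Braid 3) * sigma' 2) = (sigma' 2 : Braid 3) ^ 2 by rw [pow_two]] at this
    calc OmegaB * OmegaB * (sigma' 1 * OmegaB⁻¹ * (sigma' 1)⁻¹ *
          (sigma' 1 * (sigma' 2 : Braid 3) ^ 2 * (sigma' 1)⁻¹) *
          (sigma' 1 * OmegaB⁻¹ * (sigma' 1)⁻¹)⁻¹ *
          (sigma' 1 * (sigma' 2 : Braid 3) ^ 2 * (sigma' 1)⁻¹)⁻¹)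
        = OmegaB * OmegaB * (sigma' 1 * OmegaB⁻¹ * (sigma' 1)⁻¹) *
          (sigma' 1 * (sigma' 2 : Braid 3) ^ 2 * (sigma' 1)⁻¹) *
          (sigma' 1 * OmegaB⁻¹ * (sigma' 1)⁻¹)⁻¹ *
          (sigma' 1 * (sigma' 2 : Braid 3) ^ 2 * (sigma' 1)⁻¹)⁻¹ := by group
      _ = 1 := this
  refine ⟨PresentedGroup.toGroup hrel, ?_, ?_, ?_, ?_⟩
  · rw [PresentedGroup.toGroup.of]; rfl
  · rw [PresentedGroup.toGroup.of]; rfl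
  · rw [PresentedGroup.toGroup.of]; rfl
  · intro k hk j
    rw [PresentedGroup.toGroup.of]
    have h0 : (k : ℕ) ≠ 0 := by omega
    simp [hf, fIII, h0]
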